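/- The number of parking quasi-ribbons of size n (segmented nondecreasing parking functions, i.e. nondecreasing parking functions of length n with bars allowed only between strictly different consecutive values) equals the number of Schröder trees with n+1 leaves (the little Schröder number). -/

import Mathlib

noncomputable section

/-- Schröder trees: rooted plane trees in which every internal vertex has at least two
children. -/
inductive STree where
  | leaf : STree
  | node (a b : STree) (l : List STree) : STree

mutual
  /-- Number of leaves of a Schröder tree. -/
  def leavesT : STree → ℕ
    | .leaf => 1
    | .node a b l => leavesT a + leavesT b + leavesL l
  def leavesL : List STree → ℕ
    | [] => 0
    | t :: ts => leavesT t + leavesL ts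
end

/-- A nondecreasing parking function of length `n`. -/
def IsNDPF (n : ℕ) (w : List ℕ) : Prop :=
  w.length = n ∧ List.Pairwise (· ≤ ·) w ∧
    ∀ i, i < w.length → 1 ≤ w.getD i 0 ∧ w.getD i 0 ≤ i + 1

/-- A parking quasi-ribbon of size `n`: a nondecreasing parking function of length `n`
together with a set of bar positions, each bar placed between two consecutive positions
carrying strictly different values. -/
def IsPQR (n : ℕ) (w : List ℕ) (B : Finset ℕ) : Prop :=
  IsNDPF n w ∧ ∀ i ∈ B, i + 1 < w.length ∧ w.getD i 0 < w.getD (i + 1) 0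


theorem one_le_leavesT : ∀ t, 1 ≤ leavesT t
  | .leaf => le_refl 1
  | .node a b l => by
      have := one_le_leavesT a
      rw [leavesT]; omega

/-- Graft: attach a tree as new first child of a node. Junk value on leaf. -/
def graft : STree → STree → STree
  | a, .leaf => .leaf
  | a, .node x y l => .node a x (y :: l)

abbrev Tt (m : ℕ) := {t : STree // leavesT t = m}

def combineT (m : ℕ) :
    ((j : Fin (m+1)) × (Tt ((j : ℕ)+1) × Tt (m+1-(j : ℕ)))) ⊕
      ((j : Fin m) × (Tt ((j : ℕ)+1) × Tt (m+1-(j : ℕ)))) → Tt (m+2)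
  | .inl ⟨j, a, b⟩ => ⟨.node a.1 b.1 [], by
      have hj := j.2
      rw [leavesT, a.2, b.2, leavesL]; omega⟩
  | .inr ⟨j, a, r⟩ => ⟨graft a.1 r.1, by
      have hj := j.2
      have h2 : 2 ≤ leavesT r.1 := by rw [r.2]; omega
      obtain ⟨x | ⟨x, y, l⟩, hr⟩ := r
      · rw [leavesT] at h2; omega
      · rw [leavesT] at hr
        rw [graft, leavesT, leavesL, a.2]
        omega⟩

theorem combineT_bijective (m : ℕ) : Function.Bijective (combineT m) := by
  constructor
  · rintro (⟨j, ⟨a, ha⟩, ⟨b, hb⟩⟩ | ⟨j, ⟨a, ha⟩, ⟨r, hr⟩⟩)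
      (⟨j', ⟨a', ha'⟩, ⟨b', hb'⟩⟩ | ⟨j', ⟨a', ha'⟩, ⟨r', hr'⟩⟩) h <;>
      simp only [combineT, Subtype.mk.injEq] at h
      <;> [skip; skip; skip; skip]
    · obtain ⟨rfl, rfl, -⟩ := STree.node.injEq .. ▸ h
      obtain rfl : j = j' := by
        apply Fin.ext; have := ha ▸ ha'; omega
      rfl
    · -- inl vs inr: impossible
      exfalso
      have h2 : 2 ≤ leavesT r' := by rw [hr']; have := j'.2; omega
      cases r' with
      | leaf => rw [leavesT] at h2; omega
      | node x y l => rw [graft] at h; exact absurd (congrArg (fun t => match t with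
          | .node _ _ l => l.length | _ => 0) h) (by simp)
    · exfalso
      have h2 : 2 ≤ leavesT r := by rw [hr]; have := j.2; omega
      cases r with
      | leaf => rw [leavesT] at h2; omega
      | node x y l => rw [graft] at h; exact absurd (congrArg (fun t => match t with
          | .node _ _ l => l.length | _ => 0) h) (by simp)
    · have h2 : 2 ≤ leavesT r := by rw [hr]; have := j.2; omega
      have h2' : 2 ≤ leavesT r' := by rw [hr']; have := j'.2; omega
      cases r with
      | leaf => rw [leavesT] at h2; omega
      | node x y l =>
        cases r' with
        | leaf => rw [leavesT] at h2'; omega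
        | node x' y' l' =>
          rw [graft, graft] at h
          obtain ⟨rfl, rfl, h3⟩ := STree.node.injEq .. ▸ h
          obtain ⟨rfl, rfl⟩ := List.cons.injEq .. ▸ h3
          obtain rfl : j = j' := by
            apply Fin.ext; have := ha ▸ ha'; omega
          rfl
  · rintro ⟨(_ | ⟨a, b, l⟩), ht⟩
    · rw [leavesT] at ht; omega
    · have ha1 := one_le_leavesT a
      have hb1 := one_le_leavesT b
      rw [leavesT] at ht
      cases l with
      | nil =>
        rw [leavesL] at ht
        refine ⟨.inl ⟨⟨leavesT a - 1, by omega⟩, ⟨a, by simp only [Fin.val_mk]; omega⟩, ⟨b, by simp only [Fin.val_mk]; omega⟩⟩, ?_⟩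
        simp only [combineT]
      | cons c l' =>
        have hc1 := one_le_leavesT c
        rw [leavesL] at ht
        have hr : leavesT (.node b c l') = leavesT b + leavesT c + leavesL l' := by rw [leavesT]
        refine ⟨.inr ⟨⟨leavesT a - 1, by omega⟩, ⟨a, by simp only [Fin.val_mk]; omega⟩, ⟨.node b c l', by simp only [Fin.val_mk]; rw [hr]; omega⟩⟩, ?_⟩
        simp only [combineT, graft]

theorem card_sigma_fin {n : ℕ} (f : Fin n → Type) [∀ i, Finite (f i)] :
    Nat.card ((i : Fin n) × f i) = ∑ i, Nat.card (f i) := by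
  letI : ∀ i, Fintype (f i) := fun i => Fintype.ofFinite _
  simp [Nat.card_eq_fintype_card, Fintype.card_sigma]

instance : IsEmpty (Tt 0) := ⟨fun ⟨t, ht⟩ => by have := one_le_leavesT t; omega⟩

instance : Unique (Tt 1) where
  default := ⟨.leaf, rfl⟩
  uniq := fun ⟨t, ht⟩ => by
    cases t with
    | leaf => rfl
    | node a b l =>
      have := one_le_leavesT a; have := one_le_leavesT b
      rw [leavesT] at ht; exfalso; omega

theorem tree_finite : ∀ m, Finite (Tt m) := by
  intro m
  induction m using Nat.strong_induction_on with
  | _ m ih =>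
    match m with
    | 0 => infer_instance
    | 1 => infer_instance
    | m + 2 =>
      haveI : ∀ j : Fin (m+1), Finite (Tt ((j:ℕ)+1) × Tt (m+1-(j:ℕ))) := fun j => by
        haveI := ih ((j:ℕ)+1) (by omega)
        haveI := ih (m+1-(j:ℕ)) (by omega)
        infer_instance
      haveI : ∀ j : Fin m, Finite (Tt ((j:ℕ)+1) × Tt (m+1-(j:ℕ))) := fun j => by
        haveI := ih ((j:ℕ)+1) (by have := j.2; omega)
        haveI := ih (m+1-(j:ℕ)) (by omega)
        infer_instance
      exact Finite.of_surjective _ (combineT_bijective m).2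

theorem card_tree_rec (m : ℕ) :
    Nat.card (Tt (m+2)) =
      (∑ j : Fin (m+1), Nat.card (Tt ((j:ℕ)+1)) * Nat.card (Tt (m+1-(j:ℕ)))) +
        ∑ j : Fin m, Nat.card (Tt ((j:ℕ)+1)) * Nat.card (Tt (m+1-(j:ℕ))) := by
  haveI := tree_finite
  haveI : ∀ k, Finite (Tt k) := tree_finite
  rw [← Nat.card_eq_of_bijective _ (combineT_bijective m)]
  rw [Nat.card_sum]
  congr 1 <;> rw [card_sigma_fin] <;> exact Finset.sum_congr rfl fun j _ => Nat.card_prod _ _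

theorem getD_eq {w : List ℕ} {i : ℕ} (h : i < w.length) : w.getD i 0 = w[i] :=
  List.getD_eq_getElem w 0 h

theorem sorted_getD_le {w : List ℕ} (hs : List.Pairwise (· ≤ ·) w) {i j : ℕ}
    (hij : i ≤ j) (hj : j < w.length) : w.getD i 0 ≤ w.getD j 0 := by
  rcases eq_or_lt_of_le hij with rfl | hlt
  · exact le_refl _
  · rw [getD_eq (lt_of_lt_of_le hlt (le_of_lt hj)), getD_eq hj]
    exact List.pairwise_iff_get.1 hs ⟨i, by omega⟩ ⟨j, hj⟩ hlt

def wcomb (a : ℕ) (u v : List ℕ) : List ℕ := u ++ (a+1) :: v.map (· + a)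

def bcomb (a : ℕ) (S T : Finset ℕ) (f : Bool) : Finset ℕ :=
  S ∪ (if f then {a-1} else ∅) ∪ T.image (· + (a+1))

theorem length_wcomb {a b : ℕ} {u v : List ℕ} (hu : u.length = a) (hv : v.length = b) :
    (wcomb a u v).length = a + 1 + b := by
  simp only [wcomb, List.length_append, List.length_cons, List.length_map, hu, hv]; omega

theorem getD_wcomb_left {a : ℕ} {u v : List ℕ} (hu : u.length = a) {i : ℕ} (h : i < a) :
    (wcomb a u v).getD i 0 = u.getD i 0 := by
  rw [wcomb, getD_eq (by simp only [wcomb, List.length_append, List.length_cons, List.length_map]; omega), getD_eq (by omega),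
    List.getElem_append_left (by omega)]

theorem getD_wcomb_mid {a b : ℕ} {u v : List ℕ} (hu : u.length = a) (hv : v.length = b) :
    (wcomb a u v).getD a 0 = a + 1 := by
  rw [wcomb, getD_eq (by simp only [List.length_append, List.length_cons, List.length_map, hu, hv]; omega)]
  rw [List.getElem_append_right (show u.length ≤ a by omega)]
  simp [hu]

theorem getD_wcomb_right {a b : ℕ} {u v : List ℕ} (hu : u.length = a) (hv : v.length = b)
    {i : ℕ} (h : i < b) :
    (wcomb a u v).getD (a + 1 + i) 0 = v.getD i 0 + a := by
  rw [wcomb, getD_eq (by simp only [List.length_append, List.length_cons, List.length_map, hu, hv]; omega), getD_eq (by omega)]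
  rw [List.getElem_append_right (show u.length ≤ a + 1 + i by omega)]
  have h1 : a + 1 + i - u.length = i + 1 := by omega
  simp only [h1]
  simp [List.getElem_cons_succ, hv, h]

theorem mem_le_of_ndpf {n : ℕ} {w : List ℕ} (h : IsNDPF n w) {x : ℕ} (hx : x ∈ w) :
    1 ≤ x ∧ x ≤ n := by
  obtain ⟨i, hi, rfl⟩ := List.mem_iff_getElem.1 hx
  have := h.2.2 i hi
  rw [getD_eq hi] at this
  exact ⟨this.1, by have := h.1 ▸ hi; omega⟩

theorem isPQR_comb {a b : ℕ} {u v : List ℕ} {S T : Finset ℕ} {f : Bool}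
    (hu : IsPQR a u S) (hv : IsPQR b v T) (hf : f = true → 1 ≤ a) :
    IsPQR (a + 1 + b) (wcomb a u v) (bcomb a S T f) := by
  obtain ⟨⟨hul, hus, hub⟩, huB⟩ := hu
  obtain ⟨⟨hvl, hvs, hvb⟩, hvB⟩ := hv
  have hlen := length_wcomb (u := u) (v := v) hul hvl
  have hmemu : ∀ x ∈ u, x ≤ a := fun x hx => (mem_le_of_ndpf ⟨hul, hus, hub⟩ hx).2
  have hmemv : ∀ x ∈ v, 1 ≤ x := fun x hx => (mem_le_of_ndpf ⟨hvl, hvs, hvb⟩ hx).1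
  refine ⟨⟨hlen, ?_, ?_⟩, ?_⟩
  · -- sorted
    rw [wcomb, List.pairwise_append]
    refine ⟨hus, ?_, ?_⟩
    · rw [List.pairwise_cons]
      constructor
      · intro x hx
        obtain ⟨y, hy, rfl⟩ := List.mem_map.1 hx
        have := hmemv y hy; omega
      · exact List.Pairwise.map _ (fun x y hxy => by omega) hvs
    · intro x hx y hy
      have hxa := hmemu x hx
      rcases List.mem_cons.1 hy with rfl | hy
      · omega
      · obtain ⟨z, hz, rfl⟩ := List.mem_map.1 hy
        have := hmemv z hz; omega
  · -- bounds
    intro i hi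
    rw [hlen] at hi
    rcases lt_trichotomy i a with h | rfl | h
    · rw [getD_wcomb_left hul h]
      have := hub i (by omega)
      exact this
    · rw [getD_wcomb_mid hul hvl]; omega
    · have hib : i - (a+1) < b := by omega
      have : a + 1 + (i - (a+1)) = i := by omega
      rw [← this, getD_wcomb_right hul hvl hib]
      have := hvb (i - (a+1)) (by omega); omega
  · -- bars
    intro i hi
    rw [hlen]
    rcases Finset.mem_union.1 hi with hi' | hi'
    · rcases Finset.mem_union.1 hi' with hiS | hiF
      · -- i ∈ S
        have hSi := huB i hiS
        rw [hul] at hSi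
        have h1 : i + 1 < a := hSi.1
        rw [getD_wcomb_left hul (by omega), getD_wcomb_left hul h1]
        exact ⟨by omega, hSi.2⟩
      · -- flag bar at a - 1
        have hfa : f = true := by
          by_contra hh
          simp [Bool.not_eq_true] at hh
          simp [hh] at hiF
        have ha1 : 1 ≤ a := hf hfa
        rw [hfa, if_pos rfl] at hiF
        have : i = a - 1 := Finset.mem_singleton.1 hiF
        subst this
        have h2 : a - 1 + 1 = a := by omega
        rw [h2, getD_wcomb_mid hul hvl, getD_wcomb_left hul (by omega)]
        refine ⟨by omega, ?_⟩
        have := hub (a-1) (by omega)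
        omega
    · obtain ⟨x, hxT, rfl⟩ := Finset.mem_image.1 hi'
      have hTx := hvB x hxT
      rw [hvl] at hTx
      have h1 : x + 1 < b := hTx.1
      have e1 : x + (a+1) = a + 1 + x := by omega
      have e2 : a + 1 + x + 1 = a + 1 + (x+1) := by omega
      rw [e1, e2, getD_wcomb_right hul hvl (by omega), getD_wcomb_right hul hvl h1]
      exact ⟨by omega, by have := hTx.2; omega⟩

theorem wcomb_no_fix {a b : ℕ} {u v : List ℕ} (hu : u.length = a)
    (hv : IsNDPF b v) {i : ℕ} (ha : a < i) (hb : i < a + 1 + b) :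
    (wcomb a u v).getD i 0 < i + 1 := by
  have hib : i - (a+1) < b := by omega
  have e : a + 1 + (i - (a+1)) = i := by omega
  have h2 := getD_wcomb_right hu hv.1 hib
  have h3 := hv.2.2 (i - (a+1)) (by rw [hv.1]; omega)
  rw [e] at h2
  rw [h2]; omega

theorem wcomb_take {a : ℕ} {u v : List ℕ} (hu : u.length = a) :
    (wcomb a u v).take a = u := List.take_left' hu

theorem wcomb_drop {a : ℕ} {u v : List ℕ} (hu : u.length = a) :
    ((wcomb a u v).drop (a+1)).map (· - a) = v := by
  rw [wcomb, List.append_cons, List.drop_left' (by simp [hu])]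
  rw [List.map_map]
  have : ((· - a) ∘ (· + a)) = (id : ℕ → ℕ) := by funext x; simp
  rw [this, List.map_id]

theorem bcomb_filtS {a : ℕ} {u : List ℕ} {S T : Finset ℕ} {f : Bool}
    (hS : ∀ i ∈ S, i + 1 < a) :
    (bcomb a S T f).filter (fun i => i + 1 < a) = S := by
  ext i
  simp only [Finset.mem_filter, bcomb, Finset.mem_union, Finset.mem_image]
  constructor
  · rintro ⟨(hi | hi) | ⟨x, hx, rfl⟩, hlt⟩
    · exact hi
    · rcases f with _ | _
      · simp at hi
      · rw [if_pos rfl, Finset.mem_singleton] at hi; exfalso; omega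
    · exfalso; omega
  · intro hi
    exact ⟨Or.inl (Or.inl hi), hS i hi⟩

theorem bcomb_flag {a : ℕ} {S T : Finset ℕ} {f : Bool}
    (hS : ∀ i ∈ S, i + 1 < a) (hf : f = true → 1 ≤ a) (hf0 : a = 0 → f = false) :
    (decide (1 ≤ a ∧ a - 1 ∈ bcomb a S T f) : Bool) = f := by
  rcases Nat.eq_zero_or_pos a with rfl | ha
  · simp [hf0 rfl]
  · have : (a - 1 ∈ bcomb a S T f) ↔ f = true := by
      simp only [bcomb, Finset.mem_union, Finset.mem_image]
      constructor
      · rintro ((hi | hi) | ⟨x, hx, hxe⟩)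
        · have := hS _ hi; omega
        · rcases f with _ | _
          · simp at hi
          · rfl
        · omega
      · intro hf'
        exact Or.inl (Or.inr (by simp [hf']))
    rcases f with _ | _
    · exact decide_eq_false (by rintro ⟨-, hmem⟩; simpa using this.1 hmem)
    · exact decide_eq_true ⟨ha, this.2 rfl⟩

theorem bcomb_filtT {a : ℕ} {S T : Finset ℕ} {f : Bool}
    (hS : ∀ i ∈ S, i + 1 < a) :
    ((bcomb a S T f).filter (fun i => a + 1 ≤ i)).image (fun i => i - (a+1)) = T := by
  ext x
  simp only [Finset.mem_image, Finset.mem_filter, bcomb, Finset.mem_union]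
  constructor
  · rintro ⟨i, ⟨(hi | hi) | ⟨y, hy, rfl⟩, hle⟩, rfl⟩
    · have := hS _ hi; omega
    · rcases f with _ | _
      · simp at hi
      · rw [if_pos rfl, Finset.mem_singleton] at hi; exfalso; omega
    · simpa using hy
  · intro hx
    exact ⟨x + (a+1), ⟨Or.inr ⟨x, hx, rfl⟩, by omega⟩, by omega⟩

open Classical in
theorem decompP {n : ℕ} {w : List ℕ} {C : Finset ℕ} (h : IsPQR (n+1) w C) :
    ∃ (a : ℕ) (u v : List ℕ) (S T : Finset ℕ) (f : Bool),
      a ≤ n ∧ IsPQR a u S ∧ IsPQR (n - a) v T ∧ (f = true → 1 ≤ a) ∧ (a = 0 → f = false) ∧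
        wcomb a u v = w ∧ bcomb a S T f = C := by
  obtain ⟨⟨hl, hs, hb⟩, hB⟩ := h
  set P : ℕ → Prop := fun i => w.getD i 0 = i + 1 with hPdef
  have hP0 : P 0 := by
    have := hb 0 (by omega)
    show w.getD 0 0 = 0 + 1
    omega
  set a := Nat.findGreatest P n with hadef
  have ha_le : a ≤ n := Nat.findGreatest_le n
  have haP : w.getD a 0 = a + 1 := Nat.findGreatest_spec (Nat.zero_le n) hP0
  have key : ∀ i, a < i → i < n + 1 → w.getD i 0 < i + 1 := by
    intro i h1 h2
    have h3 := (hb i (by omega)).2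
    have h4 : ¬ P i := Nat.findGreatest_is_greatest h1 (by omega)
    have h5 : w.getD i 0 ≠ i + 1 := h4
    omega
  have mono : ∀ {i j : ℕ}, i ≤ j → j < w.length → w.getD i 0 ≤ w.getD j 0 := fun hij hj => sorted_getD_le hs hij hj
  clear_value a
  set u := w.take a with hudef
  set v := (w.drop (a+1)).map (· - a) with hvdef
  set S := C.filter (fun i => i + 1 < a) with hSdef
  set T := (C.filter (fun i => a+1 ≤ i)).image (fun i => i - (a+1)) with hTdef
  set f := decide (1 ≤ a ∧ a - 1 ∈ C) with hfdef
  clear_value u v S T f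
  have hul : u.length = a := by rw [hudef, List.length_take]; omega
  have hvl : v.length = n - a := by rw [hvdef, List.length_map, List.length_drop]; omega
  have huget : ∀ i, i < a → u.getD i 0 = w.getD i 0 := by
    intro i hi
    rw [getD_eq (by omega), getD_eq (by omega)]
    simp only [hudef, List.getElem_take]
  have hvget : ∀ i, i < n - a → v.getD i 0 = w.getD (a+1+i) 0 - a := by
    intro i hi
    rw [getD_eq (by omega), getD_eq (by omega)]
    simp only [hvdef, List.getElem_map, List.getElem_drop]
  have hwa : ∀ i, i < n + 1 → a ≤ i → a + 1 ≤ w.getD i 0 := by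
    intro i h1 h2
    have := mono h2 (by omega)
    omega
  have hu : IsPQR a u S := by
    refine ⟨⟨hul, by rw [hudef]; exact List.Pairwise.sublist (List.take_sublist _ _) hs, ?_⟩, ?_⟩
    · intro i hi
      rw [hul] at hi
      rw [huget i hi]
      exact hb i (by omega)
    · intro i hi
      rw [hSdef, Finset.mem_filter] at hi
      obtain ⟨hiC, hia⟩ := hi
      rw [hul, huget i (by omega), huget (i+1) (by omega)]
      exact ⟨hia, (hB i hiC).2⟩
  have hv : IsPQR (n - a) v T := by
    refine ⟨⟨hvl, ?_, ?_⟩, ?_⟩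
    · have hsd : List.Pairwise (· ≤ ·) (w.drop (a+1)) :=
        List.Pairwise.sublist (List.drop_sublist _ _) hs
      rw [hvdef]
      exact List.Pairwise.map _ (fun x y hxy => Nat.sub_le_sub_right hxy a) hsd
    · intro i hi
      rw [hvl] at hi
      rw [hvget i hi]
      have h1 := hwa (a+1+i) (by omega) (by omega)
      have h2 := key (a+1+i) (by omega) (by omega)
      omega
    · intro x hx
      rw [hTdef, Finset.mem_image] at hx
      obtain ⟨i, hi, rfl⟩ := hx
      rw [Finset.mem_filter] at hi
      obtain ⟨hiC, hia⟩ := hi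
      obtain ⟨hi1, hi2⟩ := hB i hiC
      rw [hl] at hi1
      rw [hvl]
      have e1 : a + 1 + (i - (a+1)) = i := by omega
      have e2 : a + 1 + (i - (a+1) + 1) = i + 1 := by omega
      rw [hvget _ (by omega), hvget _ (by omega), e1, e2]
      have h1 := hwa i (by omega) (by omega)
      exact ⟨by omega, by omega⟩
  refine ⟨a, u, v, S, T, f, ha_le, hu, hv, ?_, ?_, ?_, ?_⟩
  · intro hf
    rw [hfdef] at hf
    exact (of_decide_eq_true hf).1
  · intro ha0
    rw [hfdef, ha0]
    simp
  · -- wcomb a u v = w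
    rw [wcomb, hvdef, List.map_map]
    have hmemdrop : ∀ x ∈ w.drop (a+1), a + 1 ≤ x := by
      intro x hx
      obtain ⟨i, hi, rfl⟩ := List.mem_iff_getElem.1 hx
      rw [List.getElem_drop]
      rw [List.length_drop, hl] at hi
      have := hwa (a+1+i) (by omega) (by omega)
      rw [getD_eq (by omega)] at this
      exact this
    have : List.map ((· + a) ∘ (· - a)) (w.drop (a+1)) = w.drop (a+1) := by
      rw [List.map_congr_left (g := id) (fun x hx => by
        have := hmemdrop x hx
        simp only [Function.comp_apply, id_eq]
        omega), List.map_id]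
    rw [this]
    have hlt : a < w.length := by omega
    have hget : w[a] = a + 1 := by rw [← getD_eq hlt]; exact haP
    conv_rhs => rw [← List.take_append_drop a w, List.drop_eq_getElem_cons hlt, hget]
    rw [hudef]
  · -- bcomb = C
    ext i
    rw [bcomb]
    simp only [Finset.mem_union, Finset.mem_image]
    constructor
    · rintro ((hi | hi) | ⟨x, hx, rfl⟩)
      · exact Finset.mem_of_mem_filter i (hSdef ▸ hi)
      · rcases hfv : f with _ | _
        · rw [hfv] at hi; simp at hi
        · rw [hfv, if_pos rfl, Finset.mem_singleton] at hi
          subst hi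
          exact (of_decide_eq_true (hfdef.symm.trans hfv)).2
      · rw [hTdef, Finset.mem_image] at hx
        obtain ⟨c, hc, rfl⟩ := hx
        rw [Finset.mem_filter] at hc
        have : c - (a+1) + (a+1) = c := by omega
        rw [this]
        exact hc.1
    · intro hiC
      obtain ⟨hi1, hi2⟩ := hB i hiC
      rw [hl] at hi1
      rcases lt_trichotomy (i+1) a with hca | hca | hca
      · refine Or.inl (Or.inl ?_)
        rw [hSdef, Finset.mem_filter]
        exact ⟨hiC, hca⟩
      · refine Or.inl (Or.inr ?_)
        have hf1 : f = true := by
          rw [hfdef]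
          exact decide_eq_true ⟨by omega, by
            have : a - 1 = i := by omega
            rw [this]; exact hiC⟩
        rw [hf1, if_pos rfl, Finset.mem_singleton]
        omega
      · rcases lt_trichotomy i a with hia | heq | hia
        · exact absurd hca (by omega)
        · exfalso
          have h2 := key (i+1) (by omega) (by omega)
          rw [← heq] at haP
          omega
        · refine Or.inr ⟨i - (a+1), ?_, by omega⟩
          rw [hTdef, Finset.mem_image]
          exact ⟨i, Finset.mem_filter.2 ⟨hiC, by omega⟩, rfl⟩

theorem comb_inj {a b a' b' : ℕ} {u v u' v' : List ℕ} {S T S' T' : Finset ℕ} {f f' : Bool}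
    (hu : IsPQR a u S) (hv : IsPQR b v T) (hu' : IsPQR a' u' S') (hv' : IsPQR b' v' T')
    (hf : f = true → 1 ≤ a) (hf0 : a = 0 → f = false)
    (hf' : f' = true → 1 ≤ a') (hf0' : a' = 0 → f' = false)
    (hw : wcomb a u v = wcomb a' u' v') (hbc : bcomb a S T f = bcomb a' S' T' f') :
    a = a' ∧ u = u' ∧ v = v' ∧ S = S' ∧ T = T' ∧ f = f' := by
  have hlen : a + 1 + b = a' + 1 + b' := by
    rw [← length_wcomb hu.1.1 hv.1.1, hw, length_wcomb hu'.1.1 hv'.1.1]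
  have haa : a = a' := by
    rcases lt_trichotomy a a' with hlt | he | hlt
    · exfalso
      have h1 : (wcomb a u v).getD a' 0 = a' + 1 := by
        rw [hw]; exact getD_wcomb_mid hu'.1.1 hv'.1.1
      have h2 := wcomb_no_fix hu.1.1 hv.1 hlt (show a' < a + 1 + b by omega)
      omega
    · exact he
    · exfalso
      have h1 : (wcomb a' u' v').getD a 0 = a + 1 := by
        rw [← hw]; exact getD_wcomb_mid hu.1.1 hv.1.1
      have h2 := wcomb_no_fix hu'.1.1 hv'.1 hlt (show a < a' + 1 + b' by omega)
      omega
  subst haa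
  have hS : ∀ i ∈ S, i + 1 < a := fun i hi => by
    have := (hu.2 i hi).1; rw [hu.1.1] at this; exact this
  have hS' : ∀ i ∈ S', i + 1 < a := fun i hi => by
    have := (hu'.2 i hi).1; rw [hu'.1.1] at this; exact this
  refine ⟨rfl, ?_, ?_, ?_, ?_, ?_⟩
  · rw [← wcomb_take (v := v) hu.1.1, hw, wcomb_take hu'.1.1]
  · rw [← wcomb_drop (v := v) hu.1.1, hw, wcomb_drop hu'.1.1]
  · rw [← bcomb_filtS (u := u) (T := T) (f := f) hS, hbc, bcomb_filtS (u := u') hS']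
  · rw [← bcomb_filtT (T := T) (f := f) hS, hbc, bcomb_filtT hS']
  · rw [← bcomb_flag hS hf hf0, hbc, bcomb_flag hS' hf' hf0']

abbrev PQRt (n : ℕ) := {p : List ℕ × Finset ℕ // IsPQR n p.1 p.2}
abbrev BarC (a : ℕ) := {f : Bool // f = true → 1 ≤ a}

def combineP (n : ℕ) :
    ((j : Fin (n+1)) × (PQRt (j : ℕ) × PQRt (n - (j : ℕ)) × BarC (j : ℕ))) → PQRt (n+1) :=
  fun x =>
    ⟨(wcomb (x.1 : ℕ) x.2.1.1.1 x.2.2.1.1.1,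
      bcomb (x.1 : ℕ) x.2.1.1.2 x.2.2.1.1.2 x.2.2.2.1), by
      have h := isPQR_comb x.2.1.2 x.2.2.1.2 x.2.2.2.2
      have e : (x.1 : ℕ) + 1 + (n - (x.1 : ℕ)) = n + 1 := by have := x.1.2; omega
      rw [e] at h
      exact h⟩

theorem combineP_bijective (n : ℕ) : Function.Bijective (combineP n) := by
  constructor
  · rintro ⟨j, ⟨⟨u, S⟩, hu⟩, ⟨⟨v, T⟩, hv⟩, ⟨f, hf⟩⟩ ⟨j', ⟨⟨u', S'⟩, hu'⟩, ⟨⟨v', T'⟩, hv'⟩, ⟨f', hf'⟩⟩ h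
    simp only [combineP, Subtype.mk.injEq, Prod.mk.injEq] at h
    obtain ⟨hw, hb⟩ := h
    have hf0 : (j : ℕ) = 0 → f = false := by
      intro h0
      rcases hfv : f with _ | _
      · rfl
      · exact absurd (hf hfv) (by omega)
    have hf0' : (j' : ℕ) = 0 → f' = false := by
      intro h0
      rcases hfv : f' with _ | _
      · rfl
      · exact absurd (hf' hfv) (by omega)
    obtain ⟨haa, huu, hvv, hSS, hTT, hff⟩ := comb_inj hu hv hu' hv' hf hf0 hf' hf0' hw hb
    obtain rfl : j = j' := Fin.ext haa
    subst huu; subst hvv; subst hSS; subst hTT; subst hff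
    rfl
  · rintro ⟨⟨w, C⟩, hwC⟩
    obtain ⟨a, u, v, S, T, f, ha_le, hu, hv, hf, hf0, hwe, hbe⟩ := decompP hwC
    refine ⟨⟨⟨a, by omega⟩, ⟨(u, S), hu⟩, ⟨(v, T), hv⟩, ⟨f, hf⟩⟩, ?_⟩
    simp only [combineP]
    exact Subtype.ext (Prod.ext hwe hbe)

instance : Unique (PQRt 0) where
  default := ⟨([], ∅), ⟨⟨rfl, List.Pairwise.nil, fun i hi => by simp at hi⟩,
    fun i hi => absurd hi (Finset.notMem_empty i)⟩⟩
  uniq := fun ⟨⟨w, C⟩, h⟩ => by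
    have hw : w = [] := List.length_eq_zero_iff.1 h.1.1
    subst hw
    have hC : C = ∅ := by
      apply Finset.eq_empty_of_forall_notMem
      intro i hi
      have := (h.2 i hi).1
      simp at this
    subst hC
    rfl

instance : Unique (BarC 0) where
  default := ⟨false, by simp⟩
  uniq := fun ⟨f, hf⟩ => by
    have hfv : f = false := by
      rcases f with _ | _
      · rfl
      · exact absurd (hf rfl) (by omega)
    subst hfv
    rfl

def barCEquiv (a : ℕ) : BarC (a+1) ≃ Bool where
  toFun := fun x => x.1
  invFun := fun b => ⟨b, fun _ => by omega⟩
  left_inv := fun x => rfl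
  right_inv := fun b => rfl

theorem card_barC_zero : Nat.card (BarC 0) = 1 := Nat.card_unique
theorem card_barC_succ (a : ℕ) : Nat.card (BarC (a+1)) = 2 := by
  rw [Nat.card_congr (barCEquiv a)]
  rw [Nat.card_eq_fintype_card, Fintype.card_bool]

theorem pqr_finite : ∀ n, Finite (PQRt n) := by
  intro n
  induction n using Nat.strong_induction_on with
  | _ n ih =>
    match n with
    | 0 => infer_instance
    | n + 1 =>
      haveI : ∀ j : Fin (n+1), Finite (PQRt (j : ℕ) × PQRt (n - (j : ℕ)) × BarC (j : ℕ)) :=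
        fun j => by
          haveI := ih (j : ℕ) (by have := j.2; omega)
          haveI := ih (n - (j : ℕ)) (by omega)
          infer_instance
      exact Finite.of_surjective _ (combineP_bijective n).2

theorem card_pqr_rec (n : ℕ) :
    Nat.card (PQRt (n+1)) =
      ∑ j : Fin (n+1),
        Nat.card (PQRt (j : ℕ)) * (Nat.card (PQRt (n - (j : ℕ))) * Nat.card (BarC (j : ℕ))) := by
  haveI : ∀ k, Finite (PQRt k) := pqr_finite
  rw [← Nat.card_eq_of_bijective _ (combineP_bijective n), card_sigma_fin]
  exact Finset.sum_congr rfl fun j _ => by rw [Nat.card_prod, Nat.card_prod]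

theorem key_eq : ∀ n, Nat.card (PQRt n) = Nat.card (Tt (n+1)) := by
  intro n
  induction n using Nat.strong_induction_on with
  | _ n ih =>
    match n with
    | 0 =>
      rw [Nat.card_unique, Nat.card_unique]
    | n + 1 =>
      have hp0 : Nat.card (PQRt 0) = 1 := Nat.card_unique
      rw [card_pqr_rec n, show n + 1 + 1 = n + 2 from rfl, card_tree_rec n]
      rw [Fin.sum_univ_eq_sum_range
          (fun j => Nat.card (PQRt j) * (Nat.card (PQRt (n - j)) * Nat.card (BarC j))) (n+1),
        Fin.sum_univ_eq_sum_range (fun j => Nat.card (Tt (j+1)) * Nat.card (Tt (n+1-j))) (n+1),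
        Fin.sum_univ_eq_sum_range (fun j => Nat.card (Tt (j+1)) * Nat.card (Tt (n+1-j))) n]
      have hIH1 : ∀ j ∈ Finset.range (n+1),
          Nat.card (Tt (j+1)) * Nat.card (Tt (n+1-j)) =
            Nat.card (PQRt j) * Nat.card (PQRt (n-j)) := by
        intro j hj
        rw [Finset.mem_range] at hj
        have e1 : n+1-j = (n-j)+1 := by omega
        rw [e1, ← ih j (by omega), ← ih (n-j) (by omega)]
      have hIH2 : ∀ j ∈ Finset.range n,
          Nat.card (Tt (j+1)) * Nat.card (Tt (n+1-j)) =
            Nat.card (PQRt j) * Nat.card (PQRt (n-j)) := by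
        intro j hj
        rw [Finset.mem_range] at hj
        exact hIH1 j (by rw [Finset.mem_range]; omega)
      rw [Finset.sum_congr rfl hIH1, Finset.sum_congr rfl hIH2]
      have hrefl : ∑ j ∈ Finset.range n,
            Nat.card (PQRt (j+1)) * Nat.card (PQRt (n-1-j))
          = ∑ j ∈ Finset.range n, Nat.card (PQRt j) * Nat.card (PQRt (n-j)) := by
        rw [← Finset.sum_range_reflect (fun j => Nat.card (PQRt j) * Nat.card (PQRt (n-j))) n]
        refine Finset.sum_congr rfl fun j hj => ?_
        rw [Finset.mem_range] at hj
        have e1 : n-(n-1-j) = j + 1 := by omega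
        rw [e1, mul_comm]
      rw [Finset.sum_range_succ'
        (fun j => Nat.card (PQRt j) * (Nat.card (PQRt (n-j)) * Nat.card (BarC j))) n]
      rw [Finset.sum_range_succ (fun j => Nat.card (PQRt j) * Nat.card (PQRt (n-j))) n]
      have hL : ∑ j ∈ Finset.range n,
            Nat.card (PQRt (j+1)) * (Nat.card (PQRt (n-(j+1))) * Nat.card (BarC (j+1)))
          = 2 * ∑ j ∈ Finset.range n, Nat.card (PQRt j) * Nat.card (PQRt (n-j)) := by
        rw [← hrefl, Finset.mul_sum]
        refine Finset.sum_congr rfl fun j hj => ?_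
        rw [card_barC_succ]
        have e1 : n-(j+1) = n-1-j := by omega
        rw [e1]
        ring
      rw [hL, card_barC_zero, hp0]
      have e2 : n - 0 = n := by omega
      rw [e2, show n - n = 0 from by omega, hp0]
      ring

/-- **Parking quasi-ribbons are counted by the little Schröder numbers.** The number of
parking quasi-ribbons of size `n` equals the number of Schröder trees with `n+1` leaves. -/
theorem card_pqr_eq_card_schroeder_trees (n : ℕ) :
    Nat.card {p : List ℕ × Finset ℕ // IsPQR n p.1 p.2} =
      Nat.card {t : STree // leavesT t = n + 1} := by
  exact key_eq n
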